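/- Let X be an infinite-dimensional real Banach space. Assume that for each r ∈ ℕ the family (A_{n,r})_{n≥0} is an approximation scheme in X satisfying Shapiro's Theorem, and that n₁ ≤ n₂ and r₁ ≤ r₂ imply A_{n₁,r₁} ⊆ A_{n₂,r₂}. Then for every pair of increasing sequences (n_i) → ∞ and (r_i) → ∞ of natural numbers such that the family B_i = A_{n_i,r_i} (i ≥ 0) is an approximation scheme in X, the scheme (X,(B_i)) satisfies Shapiro's Theorem. -/

import Mathlib

open Metric Filter

/-- `(A n)` together with the map `K` is an approximation scheme in `X`. -/
structure IsApproximationScheme {X : Type*} [NormedAddCommGroup X] [NormedSpace ℝ X]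
    (A : ℕ → Set X) (K : ℕ → ℕ) : Prop where
  subset_succ : ∀ n, A n ⊆ A (n + 1)
  ne_succ : ∀ n, A n ≠ A (n + 1)
  le_K : ∀ n, n ≤ K n
  add_mem : ∀ n, ∀ x ∈ A n, ∀ y ∈ A n, x + y ∈ A (K n)
  smul_mem : ∀ n (c : ℝ), ∀ x ∈ A n, c • x ∈ A n
  dense_union : Dense (⋃ n, A n)

/-- `(X, (A n))` satisfies Shapiro's Theorem: for every nonincreasing positive sequence
`ε` converging to `0` there is `x` with `E(x, A n) ≠ O(ε n)`. -/
def SatisfiesShapiro {X : Type*} [NormedAddCommGroup X] (A : ℕ → Set X) : Prop :=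
  ∀ ε : ℕ → ℝ, (∀ n, 0 < ε n) → Antitone ε → Tendsto ε atTop (nhds 0) →
    ∃ x : X, ¬ ∃ M : ℝ, ∀ n, infDist x (A n) ≤ M * ε n

/-- `E(B, A) = sup_{b ∈ B} E(b, A)`. -/
noncomputable def setApproxError {X : Type*} [NormedAddCommGroup X] (B A : Set X) : ℝ :=
  ⨆ b : B, infDist (b : X) A

/-- `dens_n`-style quantity: `E(S(X), A) = sup_{‖x‖ = 1} E(x, A)`. -/
noncomputable def sphDist {X : Type*} [NormedAddCommGroup X] (A : Set X) : ℝ :=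
  ⨆ x : {x : X // ‖x‖ = 1}, infDist (x : X) A

lemma lemA {X : Type*} [NormedAddCommGroup X] [NormedSpace ℝ X] [Nontrivial X]
    (A : ℕ → Set X) (K : ℕ → ℕ) (hA : IsApproximationScheme A K) (m : ℕ)
    (hQ : ∀ x : X, ‖x‖ = 1 → ∃ a ∈ A m, ‖x - a‖ < 2⁻¹) :
    ¬ SatisfiesShapiro A := by
  classical
  have hmono : Monotone A := monotone_nat_of_le_succ hA.subset_succ
  set mj : ℕ → ℕ := fun j => K^[j] m with hmjdef
  have hmj0 : mj 0 = m := rfl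
  have hmjs : ∀ j, mj (j + 1) = K (mj j) := fun j => Function.iterate_succ_apply' K j m
  have hmjmono : Monotone mj := monotone_nat_of_le_succ fun j => by
    rw [hmjs]; exact hA.le_K _
  -- iteration
  have hiter : ∀ j, ∀ x : X, ‖x‖ = 1 → ∃ a ∈ A (mj j), ‖x - a‖ < 2⁻¹ ^ (j + 1) := by
    intro j
    induction j with
    | zero => simpa [hmj0] using hQ
    | succ j ih =>
      intro x hx
      obtain ⟨a, ha, hd⟩ := ih x hx
      by_cases hy : x - a = 0
      · exact ⟨a, hmono (hmjmono j.le_succ) ha, by rw [hy, norm_zero]; positivity⟩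
      · obtain ⟨a', ha', hd'⟩ := hQ (‖x - a‖⁻¹ • (x - a)) (norm_smul_inv_norm (𝕜 := ℝ) hy)
        refine ⟨a + ‖x - a‖ • a', ?_, ?_⟩
        · rw [hmjs]
          exact hA.add_mem _ a ha _
            (hA.smul_mem _ _ a' (hmono (hmj0 ▸ hmjmono (Nat.zero_le j)) ha'))
        · have hxc : x - (a + ‖x - a‖ • a') = ‖x - a‖ • (‖x - a‖⁻¹ • (x - a) - a') := by
            rw [smul_sub, smul_inv_smul₀ (norm_ne_zero_iff.mpr hy)]
            abel
          rw [hxc, norm_smul, Real.norm_eq_abs, abs_of_nonneg (norm_nonneg (x - a))]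
          calc ‖x - a‖ * ‖‖x - a‖⁻¹ • (x - a) - a'‖ < 2⁻¹ ^ (j + 1) * 2⁻¹ :=
                mul_lt_mul'' hd hd' (norm_nonneg _) (norm_nonneg _)
            _ = 2⁻¹ ^ (j + 1 + 1) := by ring
  -- A m is nonempty, hence 0 ∈ A n for n ≥ m
  obtain ⟨x0, hx0⟩ := exists_ne (0 : X)
  obtain ⟨a0, ha0, -⟩ := hQ (‖x0‖⁻¹ • x0) (norm_smul_inv_norm (𝕜 := ℝ) hx0)
  have hzero : ∀ n, m ≤ n → (0 : X) ∈ A n := fun n hn => by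
    have := hA.smul_mem m 0 a0 ha0
    rw [zero_smul] at this
    exact hmono hn this
  set g : ℕ → ℕ := fun n => Nat.findGreatest (fun j => mj j ≤ n) n with hgdef
  have hg_spec : ∀ n, m ≤ n → mj (g n) ≤ n := fun n hn =>
    Nat.findGreatest_spec (P := fun j => mj j ≤ n) (Nat.zero_le n)
      (show mj 0 ≤ n by simpa [hmj0] using hn)
  have hg_mono : Monotone g := fun n n' hnn' =>
    Nat.findGreatest_mono (fun j (hj : mj j ≤ n) => hj.trans hnn') hnn'
  have hg_tend : Tendsto g atTop atTop := by
    rw [tendsto_atTop_atTop]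
    intro J
    refine ⟨max J (mj J), fun n hn => ?_⟩
    exact Nat.le_findGreatest (le_trans (le_max_left _ _) hn)
      (le_trans (le_max_right _ _) hn)
  have hbd : ∀ (x : X) (n : ℕ), m ≤ n → infDist x (A n) ≤ ‖x‖ * 2⁻¹ ^ g n := by
    intro x n hn
    by_cases hx : x = 0
    · rw [hx, infDist_zero_of_mem (hzero n hn), norm_zero, zero_mul]
    · obtain ⟨a, ha, hd⟩ := hiter (g n) (‖x‖⁻¹ • x) (norm_smul_inv_norm (𝕜 := ℝ) hx)
      have hmem : ‖x‖ • a ∈ A n := hmono (hg_spec n hn) (hA.smul_mem _ _ a ha)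
      have hfac : x - ‖x‖ • a = ‖x‖ • (‖x‖⁻¹ • x - a) := by
        rw [smul_sub, smul_inv_smul₀ (norm_ne_zero_iff.mpr hx)]
      calc infDist x (A n) ≤ dist x (‖x‖ • a) := infDist_le_dist_of_mem hmem
        _ = ‖x‖ * ‖‖x‖⁻¹ • x - a‖ := by
            rw [dist_eq_norm, hfac, norm_smul, Real.norm_eq_abs,
              abs_of_nonneg (norm_nonneg x)]
        _ ≤ ‖x‖ * 2⁻¹ ^ (g n + 1) := by
            exact mul_le_mul_of_nonneg_left hd.le (norm_nonneg x)
        _ ≤ ‖x‖ * 2⁻¹ ^ g n := by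
            apply mul_le_mul_of_nonneg_left _ (norm_nonneg x)
            exact pow_le_pow_of_le_one (by norm_num) (by norm_num) (Nat.le_succ _)
  intro hs
  obtain ⟨x, hx⟩ := hs (fun n => 2⁻¹ ^ g n) (fun n => by positivity)
    (fun n n' h => pow_le_pow_of_le_one (by norm_num) (by norm_num) (hg_mono h))
    ((tendsto_pow_atTop_nhds_zero_of_lt_one (by norm_num) (by norm_num)).comp hg_tend)
  refine hx ⟨‖x‖ + ∑ k ∈ Finset.range m, infDist x (A k) * 2 ^ g k, fun n => ?_⟩
  have hsum_nonneg : (0:ℝ) ≤ ∑ k ∈ Finset.range m, infDist x (A k) * 2 ^ g k :=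
    Finset.sum_nonneg fun k _ => mul_nonneg infDist_nonneg (by positivity)
  by_cases hn : m ≤ n
  · calc infDist x (A n) ≤ ‖x‖ * 2⁻¹ ^ g n := hbd x n hn
      _ ≤ _ := by
          apply mul_le_mul_of_nonneg_right (le_add_of_nonneg_right hsum_nonneg)
            (by positivity)
  · push_neg at hn
    have hterm : infDist x (A n) * 2 ^ g n ≤
        ∑ k ∈ Finset.range m, infDist x (A k) * 2 ^ g k :=
      Finset.single_le_sum (f := fun k => infDist x (A k) * 2 ^ g k)
        (fun k _ => mul_nonneg infDist_nonneg (by positivity))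
        (Finset.mem_range.mpr hn)
    have key : infDist x (A n) = (infDist x (A n) * 2 ^ g n) * 2⁻¹ ^ g n := by
      rw [mul_assoc, ← mul_pow]
      norm_num
    rw [key]
    apply mul_le_mul_of_nonneg_right _ (by positivity)
    exact hterm.trans (le_add_of_nonneg_left (norm_nonneg x))

lemma lemB {X : Type*} [NormedAddCommGroup X] [NormedSpace ℝ X] [CompleteSpace X] [Nontrivial X]
    (B : ℕ → Set X) (K : ℕ → ℕ) (hB : IsApproximationScheme B K)
    (ε : ℕ → ℝ) (hpos : ∀ n, 0 < ε n) (htend : Tendsto ε atTop (nhds 0))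
    (h : ∀ x : X, ∃ M : ℝ, ∀ i, infDist x (B i) ≤ M * ε i) :
    ∃ i, ∀ x : X, ‖x‖ = 1 → ∃ a ∈ B i, ‖x - a‖ < 2⁻¹ := by
  classical
  have hmono : Monotone B := monotone_nat_of_le_succ hB.subset_succ
  -- some B i₀ is nonempty
  obtain ⟨z, hz⟩ := hB.dense_union.nonempty
  obtain ⟨s, ⟨i₀, rfl⟩, hzs⟩ := hz
  have hne : ∀ i, i₀ ≤ i → (B i).Nonempty := fun i hi => ⟨z, hmono hi hzs⟩
  -- Baire
  set S : ℕ → Set X := fun M => {x | ∀ i, infDist x (B i) ≤ M * ε i} with hSdef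
  have hScl : ∀ M, IsClosed (S M) := by
    intro M
    have : S M = ⋂ i, (fun x => infDist x (B i)) ⁻¹' Set.Iic (M * ε i) := by
      ext x; simp [hSdef, Set.mem_iInter]
    rw [this]
    exact isClosed_iInter fun i => IsClosed.preimage (continuous_infDist_pt _) isClosed_Iic
  have hScov : (⋃ M : ℕ, S M) = Set.univ := by
    ext x
    simp only [Set.mem_iUnion, Set.mem_univ, iff_true]
    obtain ⟨M, hM⟩ := h x
    exact ⟨⌈M⌉₊, fun i => (hM i).trans
      (mul_le_mul_of_nonneg_right (Nat.le_ceil M) (hpos i).le)⟩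
  obtain ⟨M, hMint⟩ := nonempty_interior_of_iUnion_of_closed hScl hScov
  obtain ⟨x₀, hx₀⟩ := hMint
  obtain ⟨δ, hδ, hball⟩ := Metric.isOpen_iff.mp isOpen_interior x₀ hx₀
  have hball' : ball x₀ δ ⊆ S M := hball.trans interior_subset
  have hx₀S : x₀ ∈ S M := hball' (mem_ball_self hδ)
  -- key estimate
  have hkey : ∀ i, i₀ ≤ i → ∀ x : X, ‖x‖ = 1 →
      infDist x (B (K i)) ≤ (4 * M / δ) * ε i := by
    intro i hi x hx
    have hyball : x₀ + (δ / 2) • x ∈ ball x₀ δ := by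
      have hd2 : dist (x₀ + (δ / 2) • x) x₀ = δ / 2 := by
        rw [dist_eq_norm, add_sub_cancel_left, norm_smul, Real.norm_eq_abs,
          abs_of_nonneg (by linarith : (0:ℝ) ≤ δ / 2), hx, mul_one]
      rw [mem_ball, hd2]; linarith
    have h1 : infDist (x₀ + (δ / 2) • x) (B i) ≤ M * ε i := hball' hyball i
    have h2 : infDist x₀ (B i) ≤ M * ε i := hx₀S i
    have step : ∀ η : ℝ, 0 < η → infDist x (B (K i)) ≤ (4 * M / δ) * ε i + η := by
      intro η hη
      have hη4 : 0 < δ * η / 4 := by positivity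
      obtain ⟨a, ha, hda⟩ := (infDist_lt_iff (hne i hi)).mp
        (lt_of_le_of_lt h1 (lt_add_of_pos_right _ hη4))
      obtain ⟨b, hb, hdb⟩ := (infDist_lt_iff (hne i hi)).mp
        (lt_of_le_of_lt h2 (lt_add_of_pos_right _ hη4))
      have hab : (2 / δ) • (a - b) ∈ B (K i) := by
        have : a - b ∈ B (K i) := by
          have := hB.add_mem i a ha ((-1 : ℝ) • b) (hB.smul_mem i (-1) b hb)
          simpa [sub_eq_add_neg] using this
        exact hB.smul_mem _ _ _ this
      have hdist : ‖x - (2 / δ) • (a - b)‖ ≤ (2 / δ) * (dist (x₀ + (δ / 2) • x) a + dist x₀ b) := by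
        have hxe : x - (2 / δ) • (a - b) = (2 / δ) • (((x₀ + (δ / 2) • x) - a) - (x₀ - b)) := by
          have h21 : (2 / δ) * (δ / 2) = 1 := by field_simp
          simp only [smul_sub, smul_add, smul_smul, h21, one_smul]
          abel
        rw [hxe, norm_smul, Real.norm_eq_abs, abs_of_nonneg (by positivity : (0:ℝ) ≤ 2 / δ)]
        refine mul_le_mul_of_nonneg_left ?_ (by positivity)
        calc ‖(x₀ + (δ / 2) • x - a) - (x₀ - b)‖ ≤ ‖x₀ + (δ / 2) • x - a‖ + ‖x₀ - b‖ :=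
              norm_sub_le _ _
          _ = dist (x₀ + (δ / 2) • x) a + dist x₀ b := by rw [dist_eq_norm, dist_eq_norm]
      have : infDist x (B (K i)) ≤ (2 / δ) * (dist (x₀ + (δ / 2) • x) a + dist x₀ b) := by
        calc infDist x (B (K i)) ≤ dist x ((2 / δ) • (a - b)) := infDist_le_dist_of_mem hab
          _ ≤ _ := by rw [dist_eq_norm]; exact hdist
      refine this.trans ?_
      have : dist (x₀ + (δ / 2) • x) a + dist x₀ b ≤ 2 * (M * ε i) + δ * η / 2 := by
        have := hda.le
        have := hdb.le
        linarith
      calc (2 / δ) * (dist (x₀ + (δ / 2) • x) a + dist x₀ b)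
          ≤ (2 / δ) * (2 * (M * ε i) + δ * η / 2) :=
            mul_le_mul_of_nonneg_left this (by positivity)
        _ = (4 * M / δ) * ε i + η := by field_simp; ring
    have := le_of_forall_pos_le_add step
    exact this
  -- choose i
  have hC : (0:ℝ) < 4 * M / δ + 1 := by positivity
  have hev : ∀ᶠ i in atTop, ε i < 2⁻¹ / (4 * M / δ + 1) :=
    htend.eventually_lt_const (by positivity)
  obtain ⟨i, hi₀, hilt⟩ := ((eventually_ge_atTop i₀).and hev).exists
  refine ⟨K i, fun x hx => ?_⟩
  have hlt : infDist x (B (K i)) < 2⁻¹ := by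
    calc infDist x (B (K i)) ≤ (4 * M / δ) * ε i := hkey i hi₀ x hx
      _ ≤ (4 * M / δ + 1) * ε i :=
          mul_le_mul_of_nonneg_right (by linarith) (hpos i).le
      _ < (4 * M / δ + 1) * (2⁻¹ / (4 * M / δ + 1)) :=
          (mul_lt_mul_iff_right₀ hC).mpr hilt
      _ = 2⁻¹ := by field_simp
  obtain ⟨a, ha, hda⟩ := (infDist_lt_iff (hne (K i) (hi₀.trans (hB.le_K i)))).mp hlt
  exact ⟨a, ha, by rwa [← dist_eq_norm]⟩

theorem stmt8 {X : Type*} [NormedAddCommGroup X] [NormedSpace ℝ X] [CompleteSpace X]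
    (hX : ¬ FiniteDimensional ℝ X) (A : ℕ → ℕ → Set X)
    (hscheme : ∀ r : ℕ, ∃ K : ℕ → ℕ, IsApproximationScheme (fun n => A n r) K)
    (hshapiro : ∀ r : ℕ, SatisfiesShapiro (fun n => A n r))
    (hmono : ∀ n₁ n₂ r₁ r₂ : ℕ, n₁ ≤ n₂ → r₁ ≤ r₂ → A n₁ r₁ ⊆ A n₂ r₂)
    (ni ri : ℕ → ℕ) (hni : Monotone ni) (hri : Monotone ri)
    (hnit : Tendsto ni atTop atTop) (hrit : Tendsto ri atTop atTop)
    (hBscheme : ∃ K : ℕ → ℕ, IsApproximationScheme (fun i => A (ni i) (ri i)) K) :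
    SatisfiesShapiro (fun i => A (ni i) (ri i)) := by
  have hnt : Nontrivial X := by
    by_contra h
    rw [not_nontrivial_iff_subsingleton] at h
    exact hX (Module.Finite.of_basis (Module.Basis.empty X (ι := Fin 0)))
  intro ε hpos hant htend
  by_contra hcon
  push_neg at hcon
  obtain ⟨KB, hKB⟩ := hBscheme
  obtain ⟨i, hQ⟩ := lemB (fun i => A (ni i) (ri i)) KB hKB ε hpos htend hcon
  obtain ⟨Kr, hKr⟩ := hscheme (ri i)
  exact lemA (fun n => A n (ri i)) Kr hKr (ni i) hQ (hshapiro (ri i))
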